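/- Fix (x₁,x₂) and suppose b¹(ρ), b²(ρ) are C¹ functions and f¹(ρ₋,ρ₊), f²(ρ₋,ρ₊) are C¹ kernels compactly supported in {ρ₋ ≤ ρ₊}. Then for i,j ∈ {1,2}: A(Q(f^j,f^i))(ρ) = −A(f^j)(ρ)·A(f^i)(ρ) + b^j(ρ)·∂_ρ[A(f^i)(ρ)]. -/

import Mathlib

open MeasureTheory Set

/-- `A(k)(ρ₋) = ∫_{ρ₋}^∞ k(ρ₋,ρ₊) dρ₊`. -/
noncomputable def Aop (k : ℝ → ℝ → ℝ) (ρ : ℝ) : ℝ := ∫ rp in Ioi ρ, k ρ rp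

/-- `(ℓ∗k)(ρ) = ∫ ℓ(ρ★) k(ρ★,ρ) dρ★`. -/
noncomputable def convL (ℓ : ℝ → ℝ) (k : ℝ → ℝ → ℝ) (ρ : ℝ) : ℝ :=
  ∫ rs, ℓ rs * k rs ρ

/-- `(k∗m)(ρ₋,ρ₊) = ∫ k(ρ₋,ρ★) m(ρ★,ρ₊) dρ★`. -/
noncomputable def convK (k m : ℝ → ℝ → ℝ) (rm rp : ℝ) : ℝ :=
  ∫ rs, k rm rs * m rs rp

/-- `Q(f^j,f^i) = f^j∗f^i − A(f^j)⊗f^i − f^j⊗A(f^i) + b^j⊗f^i_{ρ₋} − (f^j⊗b^i)_{ρ₊}`. -/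
noncomputable def Qop (bj : ℝ → ℝ) (fj : ℝ → ℝ → ℝ) (bi : ℝ → ℝ) (fi : ℝ → ℝ → ℝ)
    (rm rp : ℝ) : ℝ :=
  convK fj fi rm rp - Aop fj rm * fi rm rp - fj rm rp * Aop fi rp
    + bj rm * deriv (fun r => fi r rp) rm - deriv (fun r => fj rm r * bi r) rp

open Filter

namespace Helper

variable {k : ℝ → ℝ → ℝ}

/-- partial derivative in the first variable -/
noncomputable def D1 (k : ℝ → ℝ → ℝ) (rm rp : ℝ) : ℝ :=
  fderiv ℝ (fun p : ℝ × ℝ => k p.1 p.2) (rm, rp) (1, 0)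

lemma sliceR_cont (hk : Continuous (fun p : ℝ × ℝ => k p.1 p.2)) (rm : ℝ) :
    Continuous (fun rp => k rm rp) :=
  hk.comp (continuous_const.prodMk continuous_id)

lemma sliceL_cont (hk : Continuous (fun p : ℝ × ℝ => k p.1 p.2)) (rp : ℝ) :
    Continuous (fun rm => k rm rp) :=
  hk.comp (continuous_id.prodMk continuous_const)

lemma exists_R (hks : HasCompactSupport (fun p : ℝ × ℝ => k p.1 p.2)) :
    ∃ R > 0, (∀ rm rp : ℝ, (R < |rm| ∨ R < |rp|) → k rm rp = 0) ∧
      (∀ rm rp : ℝ, (R < |rm| ∨ R < |rp|) → D1 k rm rp = 0) := by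
  obtain ⟨R, hRpos, hR⟩ :=
    hks.isCompact.isBounded.subset_closedBall_lt 0 0
  refine ⟨R, hRpos, ?_, ?_⟩
  · intro rm rp h
    have hnmem : (rm, rp) ∉ tsupport (fun p : ℝ × ℝ => k p.1 p.2) := by
      intro hmem
      have := hR hmem
      rw [Metric.mem_closedBall, dist_zero_right, Prod.norm_def] at this
      simp only [Real.norm_eq_abs] at this
      rcases h with h | h
      · exact absurd (le_trans (le_max_left _ _) this) (not_le.2 h)
      · exact absurd (le_trans (le_max_right _ _) this) (not_le.2 h)
    exact image_eq_zero_of_notMem_tsupport (f := fun p : ℝ × ℝ => k p.1 p.2) hnmem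
  · intro rm rp h
    have hnmem : (rm, rp) ∉ tsupport (fun p : ℝ × ℝ => k p.1 p.2) := by
      intro hmem
      have := hR hmem
      rw [Metric.mem_closedBall, dist_zero_right, Prod.norm_def] at this
      simp only [Real.norm_eq_abs] at this
      rcases h with h | h
      · exact absurd (le_trans (le_max_left _ _) this) (not_le.2 h)
      · exact absurd (le_trans (le_max_right _ _) this) (not_le.2 h)
    have : fderiv ℝ (fun p : ℝ × ℝ => k p.1 p.2) (rm, rp) = 0 := by
      by_contra hne
      exact hnmem (support_fderiv_subset ℝ (by simpa [Function.mem_support] using hne))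
    simp [D1, this]

lemma diag_zero (hk : Continuous (fun p : ℝ × ℝ => k p.1 p.2))
    (hkt : ∀ rm rp, rp < rm → k rm rp = 0) (r : ℝ) : k r r = 0 := by
  have h1 : Tendsto (fun t => k r t) (nhdsWithin r (Iio r)) (nhds (k r r)) :=
    ((sliceR_cont hk r).tendsto r).mono_left nhdsWithin_le_nhds
  have h2 : Tendsto (fun t => k r t) (nhdsWithin r (Iio r)) (nhds 0) := by
    apply Tendsto.congr' _ tendsto_const_nhds
    filter_upwards [self_mem_nhdsWithin] with t ht
    exact (hkt r t ht).symm
  exact tendsto_nhds_unique h1 h2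

lemma Aop_eq (hk : Continuous (fun p : ℝ × ℝ => k p.1 p.2))
    (hkt : ∀ rm rp, rp < rm → k rm rp = 0) (rm : ℝ) :
    Aop k rm = ∫ rp, k rm rp := by
  apply setIntegral_eq_integral_of_forall_compl_eq_zero
  intro rp hrp
  rcases lt_or_eq_of_le (le_of_not_gt (fun h : rm < rp => hrp h)) with h | h
  · exact hkt rm rp h
  · rw [h]; exact diag_zero hk hkt rm

lemma hasDerivAt_slice (hk : ContDiff ℝ 1 (fun p : ℝ × ℝ => k p.1 p.2)) (rm rp : ℝ) :
    HasDerivAt (fun r => k r rp) (D1 k rm rp) rm := by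
  have h1 : HasFDerivAt (fun p : ℝ × ℝ => k p.1 p.2)
      (fderiv ℝ (fun p : ℝ × ℝ => k p.1 p.2) (rm, rp)) (rm, rp) :=
    (hk.differentiable one_ne_zero (rm, rp)).hasFDerivAt
  have h2 : HasDerivAt (fun r : ℝ => ((r, rp) : ℝ × ℝ)) ((1 : ℝ), (0 : ℝ)) rm :=
    (hasDerivAt_id rm).prodMk (hasDerivAt_const rm rp)
  exact h1.comp_hasDerivAt rm h2

lemma D1_cont (hk : ContDiff ℝ 1 (fun p : ℝ × ℝ => k p.1 p.2)) :
    Continuous (fun p : ℝ × ℝ => D1 k p.1 p.2) :=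
  (hk.continuous_fderiv one_ne_zero).clm_apply continuous_const

lemma D1_zero_of_lt (hkt : ∀ rm rp, rp < rm → k rm rp = 0) {rm rp : ℝ} (h : rp < rm) :
    D1 k rm rp = 0 := by
  have hev : (fun p : ℝ × ℝ => k p.1 p.2) =ᶠ[nhds ((rm, rp) : ℝ × ℝ)]
      (fun _ => (0 : ℝ)) := by
    have hopen : IsOpen {p : ℝ × ℝ | p.2 < p.1} := isOpen_lt continuous_snd continuous_fst
    filter_upwards [hopen.mem_nhds h] with p hp
    exact hkt p.1 p.2 hp
  have : fderiv ℝ (fun p : ℝ × ℝ => k p.1 p.2) (rm, rp)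
      = fderiv ℝ (fun _ : ℝ × ℝ => (0 : ℝ)) (rm, rp) := hev.fderiv_eq
  simp [D1, this]

lemma D1_bound (hk : ContDiff ℝ 1 (fun p : ℝ × ℝ => k p.1 p.2))
    (hks : HasCompactSupport (fun p : ℝ × ℝ => k p.1 p.2)) :
    ∃ C : ℝ, ∀ rm rp : ℝ, |D1 k rm rp| ≤ C := by
  have hsupp : HasCompactSupport (fun p : ℝ × ℝ => D1 k p.1 p.2) := by
    apply HasCompactSupport.intro hks
    intro p hp
    have : fderiv ℝ (fun p : ℝ × ℝ => k p.1 p.2) p = 0 := by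
      by_contra hne
      exact hp (support_fderiv_subset ℝ (by simpa [Function.mem_support] using hne))
    simp [D1, this]
  obtain ⟨C, hC⟩ := (D1_cont hk).bounded_above_of_compact_support hsupp
  exact ⟨C, fun rm rp => by simpa [Real.norm_eq_abs] using hC (rm, rp)⟩

lemma hasDerivAt_intAop (hk : ContDiff ℝ 1 (fun p : ℝ × ℝ => k p.1 p.2))
    (hks : HasCompactSupport (fun p : ℝ × ℝ => k p.1 p.2)) (ρ : ℝ) :
    HasDerivAt (fun r => ∫ rp, k r rp) (∫ rp, D1 k ρ rp) ρ := by
  obtain ⟨R, hRpos, hzero, hD1zero⟩ := exists_R hks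
  obtain ⟨C, hC⟩ := D1_bound hk hks
  have sliceint : ∀ r : ℝ, Integrable (fun rp => k r rp) := by
    intro r
    apply (sliceR_cont hk.continuous r).integrable_of_hasCompactSupport
    apply HasCompactSupport.intro (isCompact_Icc (a := -R) (b := R))
    intro rp hrp
    apply hzero r rp
    right
    rw [mem_Icc, not_and_or] at hrp
    rcases hrp with h | h
    · rw [abs_of_neg (by linarith [not_le.1 h])]; linarith [not_le.1 h]
    · rw [abs_of_pos (by linarith [not_le.1 h, hRpos])]; exact not_le.1 h
  refine (hasDerivAt_integral_of_dominated_loc_of_deriv_le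
    (F := fun r rp => k r rp) (F' := fun r rp => D1 k r rp)
    (bound := (Icc (-R) R).indicator fun _ => C)
    (Metric.ball_mem_nhds ρ one_pos) ?_ (sliceint ρ) ?_ ?_ ?_ ?_).2
  · exact Eventually.of_forall fun x => (sliceR_cont hk.continuous x).aestronglyMeasurable
  · exact ((D1_cont hk).comp (continuous_const.prodMk continuous_id)).aestronglyMeasurable
  · apply ae_of_all
    intro a x _
    by_cases ha : a ∈ Icc (-R) R
    · rw [indicator_of_mem ha]
      simpa [Real.norm_eq_abs] using hC x a
    · rw [indicator_of_notMem ha]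
      have : D1 k x a = 0 := by
        apply hD1zero x a
        right
        rw [mem_Icc, not_and_or] at ha
        rcases ha with h | h
        · rw [abs_of_neg (by linarith [not_le.1 h])]; linarith [not_le.1 h]
        · rw [abs_of_pos (by linarith [not_le.1 h, hRpos])]; exact not_le.1 h
      simp [this]
  · exact (integrable_indicator_iff measurableSet_Icc).2
      (integrableOn_const measure_Icc_lt_top.ne)
  · exact ae_of_all _ fun a x _ => hasDerivAt_slice hk x a

end Helper

namespace Helper

lemma abs_gt_of_not_mem_Icc {R a : ℝ} (h : a ∉ Icc (-R) R) : R < |a| := by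
  rw [mem_Icc, not_and_or] at h
  rw [lt_abs]
  rcases h with h | h
  · exact Or.inr (by linarith [not_le.1 h])
  · exact Or.inl (not_le.1 h)

lemma supp_of_zero {R : ℝ} {g : ℝ → ℝ} (h : ∀ a, R < |a| → g a = 0) :
    HasCompactSupport g :=
  HasCompactSupport.intro isCompact_Icc fun a ha => h a (abs_gt_of_not_mem_Icc ha)

end Helper

open Helper in
/-- Identity `A(Q(f^j,f^i)) = −A(f^j)A(f^i) + b^j ∂_ρ A(f^i)` for
`i,j ∈ {1,2}`. -/
theorem stmt16
    (b : Fin 2 → ℝ → ℝ) (f : Fin 2 → ℝ → ℝ → ℝ)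
    (hb : ∀ i, ContDiff ℝ 1 (b i))
    (hf : ∀ i, ContDiff ℝ 1 (fun p : ℝ × ℝ => f i p.1 p.2))
    (hfsupp : ∀ i, HasCompactSupport (fun p : ℝ × ℝ => f i p.1 p.2))
    (hftri : ∀ i rm rp, rp < rm → f i rm rp = 0) :
    ∀ i j : Fin 2, ∀ ρ : ℝ,
      Aop (fun rm rp => Qop (b j) (f j) (b i) (f i) rm rp) ρ
        = -(Aop (f j) ρ * Aop (f i) ρ) + b j ρ * deriv (fun r => Aop (f i) r) ρ := by
  intro i j ρ
  obtain ⟨Ri, hRi, hzi, hDzi⟩ := exists_R (hfsupp i)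
  obtain ⟨Rj, hRj, hzj, hDzj⟩ := exists_R (hfsupp j)
  -- continuity of slices
  have hconti := (hf i).continuous
  have hcontj := (hf j).continuous
  -- diagonal vanishing
  have hdiagi : ∀ r, f i r r = 0 := diag_zero hconti (hftri i)
  have hdiagj : ∀ r, f j r r = 0 := diag_zero hcontj (hftri j)
  -- Aop as full integral
  have hAi : ∀ r, Aop (f i) r = ∫ rp, f i r rp := Aop_eq hconti (hftri i)
  -- derivative of Aop (f i)
  have hAopD : ∀ r : ℝ, HasDerivAt (Aop (f i)) (∫ rp, D1 (f i) r rp) r := by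
    intro r
    have hfun : Aop (f i) = fun r => ∫ rp, f i r rp := funext hAi
    rw [hfun]
    exact hasDerivAt_intAop (hf i) (hfsupp i) r
  have contAopi : Continuous (Aop (f i)) :=
    (fun r => (hAopD r).differentiableAt) |> Differentiable.continuous
  -- integrable slices
  have slicei : ∀ r, Integrable (fun rp => f i r rp) := fun r =>
    (sliceR_cont hconti r).integrable_of_hasCompactSupport
      (supp_of_zero fun a ha => hzi r a (Or.inr ha))
  have slicej : ∀ r, Integrable (fun rp => f j r rp) := fun r =>
    (sliceR_cont hcontj r).integrable_of_hasCompactSupport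
      (supp_of_zero fun a ha => hzj r a (Or.inr ha))
  -- the product kernel
  set R : ℝ := max Ri Rj with hR
  have contH : Continuous (fun p : ℝ × ℝ => f j ρ p.2 * f i p.2 p.1) :=
    ((sliceR_cont hcontj ρ).comp continuous_snd).mul
      (hconti.comp (continuous_snd.prodMk continuous_fst))
  have suppH : HasCompactSupport (fun p : ℝ × ℝ => f j ρ p.2 * f i p.2 p.1) := by
    apply HasCompactSupport.intro
      ((isCompact_Icc : IsCompact (Icc (-R) R)).prod (isCompact_Icc : IsCompact (Icc (-R) R)))
    intro p hp
    rw [Set.mem_prod, not_and_or] at hp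
    rcases hp with h | h
    · have : Ri < |p.1| := lt_of_le_of_lt (le_max_left _ _) (abs_gt_of_not_mem_Icc h)
      rw [hzi p.2 p.1 (Or.inr this), mul_zero]
    · have : Rj < |p.2| := lt_of_le_of_lt (le_max_right _ _) (abs_gt_of_not_mem_Icc h)
      rw [hzj ρ p.2 (Or.inr this), zero_mul]
  have intH : Integrable (fun p : ℝ × ℝ => f j ρ p.2 * f i p.2 p.1)
      (volume.prod volume) := by
    rw [← Measure.volume_eq_prod]
    exact contH.integrable_of_hasCompactSupport suppH
  -- integrability of the five pieces
  have intP1 : Integrable (fun rp => convK (f j) (f i) ρ rp) := by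
    simpa [convK] using intH.integral_prod_left
  have intP2 : Integrable (fun rp => Aop (f j) ρ * f i ρ rp) := (slicei ρ).const_mul _
  have intP3 : Integrable (fun rp => f j ρ rp * Aop (f i) rp) := by
    apply (((sliceR_cont hcontj ρ).mul contAopi)).integrable_of_hasCompactSupport
    exact HasCompactSupport.mul_right (supp_of_zero fun a ha => hzj ρ a (Or.inr ha))
  have intD1 : Integrable (fun rp => D1 (f i) ρ rp) := by
    apply (((D1_cont (hf i)).comp
      (continuous_const.prodMk continuous_id))).integrable_of_hasCompactSupport
    exact supp_of_zero fun a ha => hDzi ρ a (Or.inr ha)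
  have intP4 : Integrable (fun rp => b j ρ * D1 (f i) ρ rp) := intD1.const_mul _
  have hg : ContDiff ℝ 1 (fun r => f j ρ r * b i r) :=
    ((hf j).comp (contDiff_const.prodMk contDiff_id)).mul (hb i)
  have hgsupp : HasCompactSupport (fun r => f j ρ r * b i r) :=
    HasCompactSupport.mul_right (supp_of_zero fun a ha => hzj ρ a (Or.inr ha))
  have intP5 : Integrable (fun rp => deriv (fun r => f j ρ r * b i r) rp) :=
    (hg.continuous_deriv le_rfl).integrable_of_hasCompactSupport hgsupp.deriv
  -- the five integrals
  have key4 : ∀ rp, deriv (fun r => f i r rp) ρ = D1 (f i) ρ rp :=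
    fun rp => (hasDerivAt_slice (hf i) ρ rp).deriv
  have step0 : Aop (fun rm rp => Qop (b j) (f j) (b i) (f i) rm rp) ρ
      = ∫ rp in Ioi ρ, (convK (f j) (f i) ρ rp - Aop (f j) ρ * f i ρ rp
          - f j ρ rp * Aop (f i) rp + b j ρ * D1 (f i) ρ rp
          - deriv (fun r => f j ρ r * b i r) rp) := by
    simp only [Aop, Qop]
    exact integral_congr_ae (ae_of_all _ fun rp => by simp only [key4])
  have split : (∫ rp in Ioi ρ, (convK (f j) (f i) ρ rp - Aop (f j) ρ * f i ρ rp
          - f j ρ rp * Aop (f i) rp + b j ρ * D1 (f i) ρ rp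
          - deriv (fun r => f j ρ r * b i r) rp))
      = (∫ rp in Ioi ρ, convK (f j) (f i) ρ rp)
        - (∫ rp in Ioi ρ, Aop (f j) ρ * f i ρ rp)
        - (∫ rp in Ioi ρ, f j ρ rp * Aop (f i) rp)
        + (∫ rp in Ioi ρ, b j ρ * D1 (f i) ρ rp)
        - (∫ rp in Ioi ρ, deriv (fun r => f j ρ r * b i r) rp) := by
    have i12 : Integrable (fun rp => convK (f j) (f i) ρ rp
        - Aop (f j) ρ * f i ρ rp) := intP1.sub intP2
    have i123 : Integrable (fun rp => convK (f j) (f i) ρ rp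
        - Aop (f j) ρ * f i ρ rp - f j ρ rp * Aop (f i) rp) := i12.sub intP3
    have i1234 : Integrable (fun rp => convK (f j) (f i) ρ rp
        - Aop (f j) ρ * f i ρ rp - f j ρ rp * Aop (f i) rp
        + b j ρ * D1 (f i) ρ rp) := i123.add intP4
    rw [integral_sub i1234.integrableOn intP5.integrableOn,
      integral_add i123.integrableOn intP4.integrableOn,
      integral_sub i12.integrableOn intP3.integrableOn,
      integral_sub intP1.integrableOn intP2.integrableOn]
  -- piece 2
  have e2 : (∫ rp in Ioi ρ, Aop (f j) ρ * f i ρ rp) = Aop (f j) ρ * Aop (f i) ρ := by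
    rw [integral_const_mul]; rfl
  -- piece 5
  have e5 : (∫ rp in Ioi ρ, deriv (fun r => f j ρ r * b i r) rp) = 0 := by
    rw [HasCompactSupport.integral_Ioi_deriv_eq hg hgsupp ρ, hdiagj ρ, zero_mul, neg_zero]
  -- piece 4
  have e4 : (∫ rp in Ioi ρ, b j ρ * D1 (f i) ρ rp)
      = b j ρ * deriv (fun r => Aop (f i) r) ρ := by
    rw [integral_const_mul]
    congr 1
    have hIic : (∫ rp in Iic ρ, D1 (f i) ρ rp) = 0 := by
      rw [← setIntegral_congr_set Iio_ae_eq_Iic]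
      exact setIntegral_eq_zero_of_forall_eq_zero fun x hx => D1_zero_of_lt (hftri i) hx
    have hIoi : (∫ rp in Ioi ρ, D1 (f i) ρ rp) = ∫ rp, D1 (f i) ρ rp := by
      rw [← intervalIntegral.integral_Iic_add_Ioi intD1.integrableOn intD1.integrableOn, hIic, zero_add]
    rw [hIoi]
    exact ((hAopD ρ).deriv).symm
  -- pieces 1 and 3 agree
  have e1 : (∫ rp in Ioi ρ, convK (f j) (f i) ρ rp)
      = ∫ rs, f j ρ rs * (∫ rp, f i rs rp) := by
    have h0 : (∫ rp in Ioi ρ, convK (f j) (f i) ρ rp) = ∫ rp, convK (f j) (f i) ρ rp := by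
      apply setIntegral_eq_integral_of_forall_compl_eq_zero
      intro rp hrp
      have hle : rp ≤ ρ := le_of_not_gt fun h => hrp h
      have : ∀ rs, f j ρ rs * f i rs rp = 0 := by
        intro rs
        rcases lt_trichotomy rs ρ with h | h | h
        · rw [hftri j ρ rs h, zero_mul]
        · rw [h, hdiagj ρ, zero_mul]
        · rw [hftri i rs rp (lt_of_le_of_lt hle h), mul_zero]
      simp only [convK, this, integral_zero]
    rw [h0]
    have hswap : (∫ rp, ∫ rs, f j ρ rs * f i rs rp)
        = ∫ rs, ∫ rp, f j ρ rs * f i rs rp := by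
      apply integral_integral_swap (f := fun rp rs => f j ρ rs * f i rs rp)
      exact intH
    simp only [convK]
    rw [hswap]
    simp_rw [integral_const_mul]
  have e3 : (∫ rp in Ioi ρ, f j ρ rp * Aop (f i) rp)
      = ∫ rs, f j ρ rs * (∫ rp, f i rs rp) := by
    have h0 : (∫ rp in Ioi ρ, f j ρ rp * Aop (f i) rp)
        = ∫ rp, f j ρ rp * Aop (f i) rp := by
      apply setIntegral_eq_integral_of_forall_compl_eq_zero
      intro rp hrp
      have hle : rp ≤ ρ := le_of_not_gt fun h => hrp h
      rcases lt_or_eq_of_le hle with h | h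
      · rw [hftri j ρ rp h, zero_mul]
      · rw [h, hdiagj ρ, zero_mul]
    rw [h0]
    simp_rw [hAi]
  rw [step0, split, e2, e5, e4, e1, e3]
  ring
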